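/- For every tree T, the following are equivalent: (i) T is the union of countably many antichains; (ii) T is the union of countably many conversely well-founded subsets, i.e., subsets containing no strictly increasing infinite sequence; (iii) T is the union of countably many subsets each of which contains no infinite chain. -/

import Mathlib

universe u

/-- A partial order is a tree if it is well-founded and the set of strict
predecessors of every element is a chain. -/
def IsTreeOrder (T : Type u) [PartialOrder T] : Prop :=
  WellFounded ((· < ·) : T → T → Prop) ∧ ∀ v : T, IsChain (· ≤ ·) {u : T | u < v}

/-- An infinite chain in a well-founded partial order contains a strictly
increasing sequence. -/
lemma chain_finite_of_no_strictMono {T : Type u} [PartialOrder T]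
    (hwf : WellFounded ((· < ·) : T → T → Prop)) (C : Set T) (hC : IsChain (· ≤ ·) C)
    (hno : ¬∃ g : ℕ → T, (∀ k, g k ∈ C) ∧ StrictMono g) : C.Finite := by
  by_contra hinf
  rw [← Set.Infinite] at hinf
  set e : ℕ ↪ ↥C := hinf.natEmbedding
  have hmem : ∀ k, ((e k : C) : T) ∈ C := fun k => (e k).2
  obtain ⟨g, h | h⟩ := exists_increasing_or_nonincreasing_subseq ((· < ·) : T → T → Prop) (fun k => (e k : T))
  · exact hno ⟨fun k => e (g k), fun k => hmem _, fun m n hmn => h m n hmn⟩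
  · -- the subsequence is strictly decreasing, contradicting well-foundedness
    have hdec : ∀ n, (e (g (n + 1)) : T) < e (g n) := by
      intro n
      have hne : (e (g (n + 1)) : T) ≠ e (g n) := by
        intro hEq
        have := g.injective (e.injective (Subtype.val_injective hEq)); omega
      rcases hC (hmem (g (n + 1))) (hmem (g n)) hne with h1 | h1
      · exact lt_of_le_of_ne h1 hne
      · exact absurd (lt_of_le_of_ne h1 hne.symm) (h n (n + 1) (by omega))
    exact (RelEmbedding.natGT (fun n => ((e (g n) : C) : T)) hdec).not_wellFounded hwf

/-- For a tree `T`, the following are equivalent: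
(i) `T` is the union of countably many antichains;
(ii) `T` is the union of countably many conversely well-founded subsets
(subsets with no strictly increasing infinite sequence);
(iii) `T` is the union of countably many subsets containing no infinite chain. -/
theorem tree_special_tfae {T : Type u} [PartialOrder T] (htree : IsTreeOrder T) :
    List.TFAE [
      ∃ f : T → ℕ, ∀ n : ℕ, IsAntichain (· ≤ ·) (f ⁻¹' {n}),
      ∃ f : T → ℕ, ∀ n : ℕ, ¬∃ g : ℕ → T, (∀ k, f (g k) = n) ∧ StrictMono g,
      ∃ f : T → ℕ, ∀ n : ℕ, ∀ s : Set T, s ⊆ f ⁻¹' {n} → IsChain (· ≤ ·) s → s.Finite] := by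
  tfae_have 1 → 3 := by
    rintro ⟨f, hf⟩
    refine ⟨f, fun n s hsub hchain => ?_⟩
    refine Set.Subsingleton.finite (fun x hx y hy => ?_)
    by_contra hne
    rcases hchain hx hy hne with h | h
    · exact hf n (hsub hx) (hsub hy) hne h
    · exact hf n (hsub hy) (hsub hx) (Ne.symm hne) h
  tfae_have 3 → 2 := by
    rintro ⟨f, hf⟩
    refine ⟨f, fun n ⟨g, hgn, hg⟩ => ?_⟩
    have hchain : IsChain (· ≤ ·) (Set.range g) := by
      rintro _ ⟨k, rfl⟩ _ ⟨l, rfl⟩ _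
      rcases le_total k l with h | h
      · exact Or.inl (hg.monotone h)
      · exact Or.inr (hg.monotone h)
    have hsub : Set.range g ⊆ f ⁻¹' {n} := by
      rintro _ ⟨k, rfl⟩; exact hgn k
    exact (Set.infinite_range_of_injective hg.injective) (hf n _ hsub hchain)
  tfae_have 2 → 1 := by
    rintro ⟨f, hf⟩
    set C : T → Set T := fun x => {y | f y = f x ∧ y < x} with hCdef
    have hfin : ∀ x, (C x).Finite := by
      intro x
      refine chain_finite_of_no_strictMono htree.1 _ ?_ ?_
      · exact fun a ha b hb hab => htree.2 x ha.2 hb.2 hab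
      · rintro ⟨g, hgC, hg⟩
        exact hf (f x) ⟨g, fun k => (hgC k).1, hg⟩
    refine ⟨fun x => Nat.pair (f x) ((C x).ncard), fun n => ?_⟩
    rintro x hx y hy hne hle
    have hlt : x < y := lt_of_le_of_ne hle hne
    have hx' : Nat.pair (f x) ((C x).ncard) = n := hx
    have hy' : Nat.pair (f y) ((C y).ncard) = n := hy
    have hpair := Nat.pair_eq_pair.1 (hx'.trans hy'.symm)
    have hssub : C x ⊂ C y := by
      constructor
      · rintro z ⟨hz1, hz2⟩
        exact ⟨hz1.trans hpair.1, hz2.trans hlt⟩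
      · intro hsub
        exact absurd (hsub ⟨hpair.1, hlt⟩).2 (lt_irrefl x)
    exact absurd hpair.2 (Set.ncard_lt_ncard hssub (hfin y)).ne
  tfae_finish
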